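/- (Theorem 1, condition i) Let N ≥ 2 and let E : Fin N → Fin N → Prop, C : Fin N → Fin N → Bool, T : Fin N → Fin N → ℂ with T a j ≠ 0 ↔ E a j, and let Ψ be the postselected coefficient function. If Ψ is genuinely entangled, then for every j : Fin N there exist maximally matchable edges (a, j) and (b, j) of E with C a j ≠ C b j; i.e., every vertex of the perfect matching diagram has (at least) two incoming edges of different colors. -/

import Mathlib

open scoped Classical

/-- The postselected (bosonic) coefficient function of an LQN:
`Ψ s = Σ_{σ PM of E with outcome string s} Π_a T a (σ a)`. -/
noncomputable def lqnPsi {V : Type*} [Fintype V] [DecidableEq V]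
    (E : V → V → Prop) (C : V → V → Bool) (T : V → V → ℂ)
    (s : V → Bool) : ℂ :=
  ∑ σ ∈ Finset.univ.filter (fun σ : Equiv.Perm V =>
      (∀ a, E a (σ a)) ∧ ∀ j, C (σ⁻¹ j) j = s j),
    ∏ a, T a (σ a)

/-- Theorem 1, condition i: If the postselected coefficient function `Ψ`
is genuinely entangled (nonzero and not separable across any bipartition
`∅ ⊊ S ⊊ Fin N`), then every vertex `j` of the perfect matching diagram has two incoming
maximally matchable edges of different colors. -/
theorem lqn_thm1_colors (N : ℕ) (hN : 2 ≤ N)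
    (E : Fin N → Fin N → Prop) (C : Fin N → Fin N → Bool)
    (T : Fin N → Fin N → ℂ) (hT : ∀ a j, T a j ≠ 0 ↔ E a j)
    (hΨ : lqnPsi E C T ≠ 0)
    (hgen : ∀ S : Set (Fin N), S.Nonempty → S ≠ Set.univ →
      ¬ ∃ f g : (Fin N → Bool) → ℂ,
        (∀ s t : Fin N → Bool, (∀ j ∈ S, s j = t j) → f s = f t) ∧
        (∀ s t : Fin N → Bool, (∀ j ∉ S, s j = t j) → g s = g t) ∧
        ∀ s : Fin N → Bool, lqnPsi E C T s = f s * g s) :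
    ∀ j : Fin N, ∃ a b : Fin N,
      (∃ σ : Equiv.Perm (Fin N), (∀ x, E x (σ x)) ∧ σ a = j) ∧
      (∃ σ : Equiv.Perm (Fin N), (∀ x, E x (σ x)) ∧ σ b = j) ∧
      C a j ≠ C b j := by
  intro j
  by_contra hcon
  push_neg at hcon
  -- Ψ ≠ 0 gives some s₀ with a contributing perfect matching σ₀
  have hex : ∃ s, lqnPsi E C T s ≠ 0 := by
    by_contra h; push_neg at h; exact hΨ (funext h)
  obtain ⟨s₀, hs₀⟩ := hex
  unfold lqnPsi at hs₀
  obtain ⟨σ₀, hσ₀, -⟩ := Finset.exists_ne_zero_of_sum_ne_zero hs₀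
  simp only [Finset.mem_filter, Finset.mem_univ, true_and] at hσ₀
  obtain ⟨hE₀, hout₀⟩ := hσ₀
  set c : Bool := C (σ₀⁻¹ j) j with hc
  -- every perfect matching puts color c into j
  have key : ∀ σ : Equiv.Perm (Fin N), (∀ a, E a (σ a)) → C (σ⁻¹ j) j = c :=
    fun σ hE => hcon (σ⁻¹ j) (σ₀⁻¹ j)
      ⟨σ, hE, Equiv.apply_symm_apply σ j⟩
      ⟨σ₀, hE₀, Equiv.apply_symm_apply σ₀ j⟩
  -- hence Ψ s = 0 whenever s j ≠ c
  have hzero : ∀ s : Fin N → Bool, s j ≠ c → lqnPsi E C T s = 0 := by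
    intro s hs
    unfold lqnPsi
    apply Finset.sum_eq_zero
    intro σ hσ
    simp only [Finset.mem_filter, Finset.mem_univ, true_and] at hσ
    obtain ⟨hE, hout⟩ := hσ
    exact absurd ((hout j).symm.trans (key σ hE)) hs
  -- separability across {j}
  haveI : Nontrivial (Fin N) := Fin.nontrivial_iff_two_le.mpr hN
  obtain ⟨k, hk⟩ := exists_ne j
  refine hgen {j} ⟨j, rfl⟩ (fun h => hk ?_)
    ⟨fun s => if s j = c then 1 else 0,
     fun s => lqnPsi E C T (Function.update s j c), ?_, ?_, ?_⟩
  · have := h ▸ Set.mem_univ k; exact this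
  · intro s t hst
    simp [hst j rfl]
  · intro s t hst
    have : Function.update s j c = Function.update t j c := by
      funext x
      by_cases hx : x = j
      · subst hx; simp
      · simp [Function.update_of_ne hx, hst x hx]
    exact congrArg (lqnPsi E C T) this
  · intro s
    by_cases hs : s j = c
    · have : Function.update s j c = s := by
        funext x
        by_cases hx : x = j
        · subst hx; simp [hs]
        · simp [Function.update_of_ne hx]
      simp [hs, this]
    · simp [hs, hzero s hs]
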